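/- Let μ₀ > 0 satisfy 7μ₀² + 59μ₀ − 500 = 0, set ω₀ = √(7μ₀), and let A₀ be the 4×4 complex matrix [[−2, 0, 0, 3], [−10/3, −μ₀, 0, 0], [0, 0, 0, 0], [10/3, 50−μ₀, 0, −5]]. Then the vector q₀ = (3(μ₀ + iω₀), −10, 0, −5μ₀ + iω₀(2+μ₀)) ∈ ℂ⁴ satisfies A₀ q₀ = iω₀ q₀; that is, q₀ is a right eigenvector of A₀ for the eigenvalue iω₀. -/
import Mathlib


open Matrix

/-- `q₀` is a right eigenvector of the `ε = 0` Jacobian `A₀` for the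
eigenvalue `iω₀`, `ω₀ = √(7μ₀)`. -/
theorem stmt_10 (μ₀ : ℝ) (hμ : 0 < μ₀) (h : 7 * μ₀ ^ 2 + 59 * μ₀ - 500 = 0)
    (ω₀ : ℝ) (hω : ω₀ = Real.sqrt (7 * μ₀))
    (A₀ : Matrix (Fin 4) (Fin 4) ℂ)
    (hA : A₀ = !![-2, 0, 0, 3;
                  -10/3, -(μ₀ : ℂ), 0, 0;
                  0, 0, 0, 0;
                  10/3, 50 - (μ₀ : ℂ), 0, -5])
    (q₀ : Fin 4 → ℂ)
    (hq : q₀ = ![3 * ((μ₀ : ℂ) + Complex.I * (ω₀ : ℂ)), -10, 0,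
                 -5 * (μ₀ : ℂ) + Complex.I * (ω₀ : ℂ) * (2 + (μ₀ : ℂ))]) :
    A₀.mulVec q₀ = (Complex.I * (ω₀ : ℂ)) • q₀ := by
  have hω2 : (ω₀ : ℂ) ^ 2 = 7 * (μ₀ : ℂ) := by
    have : ω₀ ^ 2 = 7 * μ₀ := by
      rw [hω, Real.sq_sqrt (by linarith)]
    exact_mod_cast congrArg (Complex.ofReal) this
  have hh : 7 * (μ₀ : ℂ) ^ 2 + 59 * (μ₀ : ℂ) - 500 = 0 := by
    exact_mod_cast congrArg (Complex.ofReal) h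
  subst hA hq
  funext i
  fin_cases i <;>
    simp [mulVec, dotProduct, Fin.sum_univ_succ] <;>
    first
    | linear_combination 3 * hω2 - 3 * (ω₀:ℂ)^2 * Complex.I_sq
    | linear_combination hh + (2 + (μ₀:ℂ)) * hω2 - (2 + (μ₀:ℂ)) * (ω₀:ℂ)^2 * Complex.I_sq
    | ring
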